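/- Let δ_S, δ_R, q_S, q_R ∈ [0,1] and P_SD, P_SR, P_RD ∈ (0,1) with P = P_SD + (1−P_SD)·P_SR. Every pair (λ_S, λ_R) in the inner bound R_inner, i.e. satisfying λ_S < min(δ_S,q_S)·(1−min(δ_R,q_R))·P and λ_R + ((1−P_SD)·P_SR/P)·λ_S < min(δ_R,q_R)·(1−min(δ_S,q_S))·P_RD, also lies in the region R_2 defined by λ_R + [ (1−m_R)·(1−P_SD)·P_SR + m_R·P_RD ]/[ (1−m_R)·P ]·λ_S < m_R·P_RD and λ_S < m_S·(1−m_R)·P, where m_S = min(δ_S,q_S), m_R = min(δ_R,q_R). -/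

import Mathlib

/-- The inner bound `R_inner` is contained in the region `R_2` of the outer
bound. -/
theorem inner_subset_R2 (δ_S δ_R q_S q_R P_SD P_SR P_RD lamS lamR : ℝ)
    (hδS : δ_S ∈ Set.Icc (0:ℝ) 1) (hδR : δ_R ∈ Set.Icc (0:ℝ) 1)
    (hqS : q_S ∈ Set.Icc (0:ℝ) 1) (hqR : q_R ∈ Set.Icc (0:ℝ) 1)
    (hSD : P_SD ∈ Set.Ioo (0:ℝ) 1) (hSR : P_SR ∈ Set.Ioo (0:ℝ) 1)
    (hRD : P_RD ∈ Set.Ioo (0:ℝ) 1)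
    (P : ℝ) (hP : P = P_SD + (1 - P_SD) * P_SR)
    (hlamS0 : 0 ≤ lamS) (hlamR0 : 0 ≤ lamR)
    (mS mR : ℝ) (hmS : mS = min δ_S q_S) (hmR : mR = min δ_R q_R)
    (h1 : lamS < mS * (1 - mR) * P)
    (h2 : lamR + ((1 - P_SD) * P_SR / P) * lamS < mR * (1 - mS) * P_RD) :
    lamR + (((1 - mR) * ((1 - P_SD) * P_SR) + mR * P_RD) / ((1 - mR) * P)) * lamS
      < mR * P_RD ∧
    lamS < mS * (1 - mR) * P := by
  obtain ⟨hSD0, hSD1⟩ := hSD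
  obtain ⟨hSR0, hSR1⟩ := hSR
  obtain ⟨hRD0, hRD1⟩ := hRD
  have hP0 : 0 < P := by nlinarith
  have hmR0 : 0 ≤ mR := by
    rw [hmR]; exact le_min hδR.1 hqR.1
  have hmR1 : mR ≤ 1 := by
    rw [hmR]; exact min_le_of_left_le hδR.2
  have hmS0 : 0 ≤ mS := by
    rw [hmS]; exact le_min hδS.1 hqS.1
  have hmS1 : mS ≤ 1 := by
    rw [hmS]; exact min_le_of_left_le hδS.2
  have hmRlt : mR < 1 := by
    by_contra h
    push_neg at h
    have : mR = 1 := le_antisymm hmR1 h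
    rw [this] at h1
    nlinarith
  have hden : 0 < (1 - mR) * P := mul_pos (by linarith) hP0
  have hc : 0 ≤ mR * P_RD / ((1 - mR) * P) := by positivity
  refine ⟨?_, h1⟩
  have hsplit : (((1 - mR) * ((1 - P_SD) * P_SR) + mR * P_RD) / ((1 - mR) * P)) * lamS
      = ((1 - P_SD) * P_SR / P) * lamS + (mR * P_RD / ((1 - mR) * P)) * lamS := by
    field_simp [(sub_pos.mpr hmRlt).ne']
  have h3 : (mR * P_RD / ((1 - mR) * P)) * lamS ≤ mR * mS * P_RD := by
    have := mul_le_mul_of_nonneg_left h1.le hc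
    calc (mR * P_RD / ((1 - mR) * P)) * lamS
        ≤ (mR * P_RD / ((1 - mR) * P)) * (mS * (1 - mR) * P) := this
      _ = mR * mS * P_RD := by field_simp [(sub_pos.mpr hmRlt).ne']
  rw [hsplit]
  nlinarith [h2, h3]
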